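/- Let G be a finite group acting transitively on a finite set X and let π be the permutation character, π(g) = number of fixed points of g on X. If π = 1 + χ₁ + ⋯ + χ_k is the decomposition with each χ_i a nontrivial irreducible character (repetitions allowed, k ≥ 1), then for every g ∈ G there exists some i with π(g)/π(1) ≤ (1 + |χ_i(g)|)/(1 + χ_i(1)). -/

import Mathlib

open MulAction

theorem stmt_4 (G X : Type) [Group G] [Finite G] [Finite X] [Nonempty X]
    [MulAction G X] [IsPretransitive G X]
    (k : ℕ) (hk : 1 ≤ k) (W : Fin k → FDRep ℂ G)
    (hsimple : ∀ i, CategoryTheory.Simple (W i))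
    (hnontriv : ∀ i, (W i).character ≠ fun _ => 1)
    (hdecomp : ∀ g : G, (Nat.card (fixedBy X g) : ℂ) = 1 + ∑ i, (W i).character g)
    (g : G) :
    ∃ i, (Nat.card (fixedBy X g) : ℝ) / (Nat.card X : ℝ) ≤
      (1 + ‖(W i).character g‖) / (1 + ‖(W i).character 1‖) := by
  set a : Fin k → ℝ := fun i => ‖(W i).character g‖ with ha
  set b : Fin k → ℝ := fun i => ‖(W i).character 1‖ with hb
  have hb0 : ∀ i, 0 ≤ b i := fun i => norm_nonneg _
  have ha0 : ∀ i, 0 ≤ a i := fun i => norm_nonneg _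
  have hbpos : ∀ i, (0:ℝ) < 1 + b i := fun i => by linarith [hb0 i]
  -- card X > 0
  have hXpos : (0:ℝ) < (Nat.card X : ℝ) := by
    have := Nat.card_pos (α := X)
    exact_mod_cast this
  -- π(1) = card X
  have hcard1 : (Nat.card (fixedBy X (1:G)) : ℂ) = (Nat.card X : ℂ) := by
    rw [fixedBy_one_eq_univ, Nat.card_univ]
  -- π(1) = 1 + ∑ b i
  have hπ1 : (Nat.card X : ℝ) = 1 + ∑ i, b i := by
    have h1 := hdecomp 1
    rw [hcard1] at h1
    have h2 : (Nat.card X : ℂ) = 1 + ∑ i, ((Module.finrank ℂ (W i) : ℂ)) := by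
      rw [h1]; congr 1; exact Finset.sum_congr rfl fun i _ => FDRep.char_one (W i)
    have h3 : (Nat.card X : ℝ) = 1 + ∑ i, ((Module.finrank ℂ (W i) : ℝ)) := by
      exact_mod_cast h2
    rw [h3]; congr 1
    refine Finset.sum_congr rfl fun i _ => ?_
    rw [hb]
    simp [FDRep.char_one]
  -- π(g) ≤ 1 + ∑ a i
  have hπg : (Nat.card (fixedBy X g) : ℝ) ≤ 1 + ∑ i, a i := by
    have h1 := hdecomp g
    have h2 : (Nat.card (fixedBy X g) : ℝ) = ‖((Nat.card (fixedBy X g) : ℂ))‖ := by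
      simp
    rw [h2, h1]
    calc ‖(1 + ∑ i, (W i).character g)‖
        ≤ ‖(1:ℂ)‖ + ‖(∑ i, (W i).character g)‖ := norm_add_le _ _
      _ ≤ 1 + ∑ i, a i := by
          simp only [norm_one]
          gcongr
          exact norm_sum_le _ _
  by_cases hcase : ∃ i, b i ≤ a i
  · obtain ⟨i, hi⟩ := hcase
    refine ⟨i, le_trans (b := (1:ℝ)) ?_ ?_⟩
    · rw [div_le_one hXpos]
      have : Nat.card (fixedBy X g) ≤ Nat.card X :=
        Nat.card_le_card_of_injective _ (Subtype.coe_injective (p := (· ∈ fixedBy X g)))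
      exact_mod_cast this
    · rw [le_div_iff₀ (hbpos i), one_mul]
      linarith
  · push_neg at hcase
    have : Nonempty (Fin k) := ⟨⟨0, hk⟩⟩
    obtain ⟨i₀, -, hmax⟩ := Finset.exists_max_image Finset.univ
      (fun i => (1 + a i) / (1 + b i)) ⟨Classical.arbitrary _, Finset.mem_univ _⟩
    set c : ℝ := (1 + a i₀) / (1 + b i₀) with hc
    have hci : ∀ i, 1 + a i ≤ c * (1 + b i) := fun i => by
      have := hmax i (Finset.mem_univ i)
      rwa [div_le_iff₀ (hbpos i)] at this
    have hc1 : c < 1 := by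
      rw [hc, div_lt_one (hbpos i₀)]
      linarith [hcase i₀]
    have hsum : (k:ℝ) + ∑ i, a i ≤ c * ((k:ℝ) + ∑ i, b i) := by
      have := Finset.sum_le_sum (fun i (_ : i ∈ Finset.univ) => hci i)
      simp only [Finset.sum_add_distrib, Finset.sum_const, Finset.card_univ,
        Fintype.card_fin, nsmul_eq_mul, mul_one, Finset.mul_sum, mul_add] at this ⊢
      linarith [this]
    have hk1 : (1:ℝ) ≤ (k:ℝ) := by exact_mod_cast hk
    have hkey : 1 + ∑ i, a i ≤ c * (1 + ∑ i, b i) := by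
      nlinarith [mul_nonneg (sub_nonneg.mpr hk1) (sub_nonneg.mpr hc1.le)]
    refine ⟨i₀, ?_⟩
    rw [div_le_div_iff₀ hXpos (hbpos i₀)]
    calc (Nat.card (fixedBy X g) : ℝ) * (1 + b i₀)
        ≤ (1 + ∑ i, a i) * (1 + b i₀) := by
          apply mul_le_mul_of_nonneg_right hπg (hbpos i₀).le
      _ ≤ c * (1 + ∑ i, b i) * (1 + b i₀) := by
          apply mul_le_mul_of_nonneg_right hkey (hbpos i₀).le
      _ = (1 + a i₀) * (Nat.card X : ℝ) := by
          rw [hπ1, hc]; field_simp [(hbpos i₀).ne']
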